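/- (Chain rule for pattern influence, algebraic form of Proposition 1.) Let G be an acyclic directed graph in which the set of paths between any two vertices is finite, let R be a commutative ring, let w assign a weight in R to each edge, and let π = [π₀, π₁, …, πₙ] be a pattern such that for each i < n there exists at least one path from πᵢ to πᵢ₊₁. Then the sum over all paths p ∈ γ(π) of the weight of p equals the product over i = 1, …, n of the sums, over all paths from πᵢ₋₁ to πᵢ, of their weights. -/

import Mathlib

universe v u

/-- A quiver (directed graph) is *acyclic* if for every vertex `a`, the only path from `a`
back to `a` is the nil path. -/
def Quiver.IsAcyclic (V : Type*) [Quiver V] : Prop :=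
  ∀ (a : V) (p : Quiver.Path a a), p = Quiver.Path.nil

/-- The list of vertices visited along a path, including both endpoints
(the starting vertex comes first). -/
def Quiver.Path.visitedVertices {V : Type*} [Quiver V] {a : V} :
    ∀ {b : V}, Quiver.Path a b → List V
  | _, Quiver.Path.nil => [a]
  | b, Quiver.Path.cons p _ => Quiver.Path.visitedVertices p ++ [b]

/-- A path *passes through* a vertex `w` if `w` is one of the vertices visited along it. -/
def Quiver.Path.PassesThrough {V : Type*} [Quiver V] {a b : V}
    (p : Quiver.Path a b) (w : V) : Prop :=
  w ∈ p.visitedVertices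

/-- The weight of a path: the product of the weights of its edges
(the nil path has weight `1`). -/
def Quiver.Path.pathWeight {V : Type*} [Quiver V] {R : Type*} [CommRing R]
    (w : ∀ {a b : V}, (a ⟶ b) → R) {a : V} : ∀ {b : V}, Quiver.Path a b → R
  | _, Quiver.Path.nil => 1
  | _, Quiver.Path.cons p e => Quiver.Path.pathWeight w p * w e

section Aux

variable {V : Type u} [Quiver.{v + 1} V]

open Quiver

lemma weight_comp {R : Type*} [CommRing R] (w : ∀ {a b : V}, (a ⟶ b) → R)
    {a b : V} (p : Quiver.Path a b) : ∀ {c : V} (q : Quiver.Path b c),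
    (p.comp q).pathWeight w = p.pathWeight w * q.pathWeight w
  | _, Quiver.Path.nil => by simp [Quiver.Path.pathWeight]
  | _, Quiver.Path.cons q e => by
      simp [Quiver.Path.pathWeight, weight_comp w p q, mul_assoc]

lemma end_mem_vertices {a : V} : ∀ {b : V} (p : Quiver.Path a b), b ∈ p.visitedVertices
  | _, Quiver.Path.nil => by simp [Quiver.Path.visitedVertices]
  | _, Quiver.Path.cons p e => by simp [Quiver.Path.visitedVertices]

lemma start_mem_vertices {a : V} : ∀ {b : V} (p : Quiver.Path a b), a ∈ p.visitedVertices
  | _, Quiver.Path.nil => by simp [Quiver.Path.visitedVertices]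
  | _, Quiver.Path.cons p e => by
      simp [Quiver.Path.visitedVertices, start_mem_vertices p]

lemma mem_vertices_comp {a b : V} (p : Quiver.Path a b) {x : V} :
    ∀ {c : V} (q : Quiver.Path b c),
    x ∈ (p.comp q).visitedVertices ↔ x ∈ p.visitedVertices ∨ x ∈ q.visitedVertices
  | _, Quiver.Path.nil => by
      simp only [Quiver.Path.comp_nil, Quiver.Path.visitedVertices, List.mem_singleton]
      constructor
      · exact Or.inl
      · rintro (h | rfl)
        · exact h
        · exact end_mem_vertices p
  | _, Quiver.Path.cons q e => by
      simp only [Quiver.Path.comp_cons, Quiver.Path.visitedVertices, List.mem_append,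
        List.mem_singleton, mem_vertices_comp p q, or_assoc]

lemma exists_decomp {a x : V} : ∀ {c : V} (p : Quiver.Path a c), x ∈ p.visitedVertices →
    ∃ (q : Quiver.Path a x) (r : Quiver.Path x c), p = q.comp r
  | _, Quiver.Path.nil, h => by
      simp only [Quiver.Path.visitedVertices, List.mem_singleton] at h
      subst h
      exact ⟨Quiver.Path.nil, Quiver.Path.nil, rfl⟩
  | c, Quiver.Path.cons p e, h => by
      simp only [Quiver.Path.visitedVertices, List.mem_append, List.mem_singleton] at h
      rcases h with h | rfl
      · obtain ⟨q, r, rfl⟩ := exists_decomp p h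
        exact ⟨q, r.cons e, by simp [Quiver.Path.comp_cons]⟩
      · exact ⟨p.cons e, Quiver.Path.nil, rfl⟩

lemma comp_cancel (hG : Quiver.IsAcyclic V) {a b : V} {q q' : Quiver.Path a b} :
    ∀ {c : V} {r r' : Quiver.Path b c}, q.comp r = q'.comp r' → q = q' ∧ r = r' := by
  intro c r
  induction r with
  | nil =>
    intro r' h
    have hr' : r' = Quiver.Path.nil := hG b r'
    subst hr'
    simp only [Quiver.Path.comp_nil] at h
    exact ⟨h, rfl⟩
  | cons r e ih =>
    intro r' h
    cases r' with
    | nil =>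
      exact absurd (hG b (r.cons e)) (by simp)
    | cons r' e' =>
      simp only [Quiver.Path.comp_cons] at h
      injection h with h1 h2 h3 h4
      subst h1
      obtain ⟨hq, hr⟩ := ih (eq_of_heq h3)
      exact ⟨hq, by rw [hr, eq_of_heq h4]⟩

lemma nonempty_path_of_le {m : ℕ} (π : Fin (m + 1) → V)
    (hπ : ∀ i : Fin m, Nonempty (Quiver.Path (π i.castSucc) (π i.succ))) :
    ∀ (d : ℕ) (j k : Fin (m + 1)), k.val = j.val + d → Nonempty (Quiver.Path (π j) (π k)) := by
  intro d
  induction d with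
  | zero =>
    intro j k hk
    have : j = k := Fin.ext (by omega)
    subst this
    exact ⟨Quiver.Path.nil⟩
  | succ d ihd =>
    intro j k hk
    have hkm : k.val < m + 1 := k.isLt
    have hi : j.val + d < m := by omega
    set i : Fin m := ⟨j.val + d, hi⟩ with hidef
    obtain ⟨p⟩ := ihd j i.castSucc rfl
    obtain ⟨e⟩ := hπ i
    have hk' : k = i.succ := Fin.ext (by simp [hidef]; omega)
    subst hk'
    exact ⟨p.comp e⟩

open scoped Classical in
lemma suminsert [∀ a b : V, Fintype (Quiver.Path a b)] {R : Type*} [CommRing R]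
    (hG : Quiver.IsAcyclic V) (w : ∀ {a b : V}, (a ⟶ b) → R) {a b c : V}
    (Q : V → Prop) (hQ : ∀ x, Q x → Nonempty (Quiver.Path x b)) :
    (∑ p : {p : Quiver.Path a c // p.PassesThrough b ∧ ∀ x, Q x → p.PassesThrough x},
      (p : Quiver.Path a c).pathWeight w)
    = (∑ q : {q : Quiver.Path a b // ∀ x, Q x → (q : Quiver.Path a b).PassesThrough x},
        (q : Quiver.Path a b).pathWeight w) * ∑ r : Quiver.Path b c, r.pathWeight w := by
  set A := {p : Quiver.Path a c // p.PassesThrough b ∧ ∀ x, Q x → p.PassesThrough x}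
  set B := {q : Quiver.Path a b // ∀ x, Q x → (q : Quiver.Path a b).PassesThrough x}
      × Quiver.Path b c
  let Ψ : B → A := fun z => ⟨z.1.val.comp z.2,
    (mem_vertices_comp _ _).2 (Or.inl (end_mem_vertices _)),
    fun x hx => (mem_vertices_comp _ _).2 (Or.inl (z.1.2 x hx))⟩
  have hbij : Function.Bijective Ψ := by
    constructor
    · rintro ⟨⟨q1, h1⟩, r1⟩ ⟨⟨q2, h2⟩, r2⟩ h
      have h' : q1.comp r1 = q2.comp r2 := congrArg Subtype.val h
      obtain ⟨hq, hr⟩ := comp_cancel hG h'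
      subst hq; subst hr; rfl
    · rintro ⟨p, hb, hx⟩
      obtain ⟨q, r, rfl⟩ := exists_decomp p hb
      refine ⟨⟨⟨q, ?_⟩, r⟩, rfl⟩
      intro x hxq
      rcases (mem_vertices_comp q r).1 (hx x hxq) with h | h
      · exact h
      · obtain ⟨r1, r2, hrr⟩ := exists_decomp r h
        obtain ⟨s⟩ := hQ x hxq
        have hnil : s.comp r1 = Quiver.Path.nil := hG x (s.comp r1)
        have hlen : s.length = 0 := by
          have := congrArg Quiver.Path.length hnil
          rw [Quiver.Path.length_comp] at this
          simpa using Nat.eq_zero_of_add_eq_zero_right this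
        have hxb : x = b := Quiver.Path.eq_of_length_zero s hlen
        subst hxb
        exact end_mem_vertices q
  rw [Fintype.sum_mul_sum]
  exact ((Fintype.sum_bijective Ψ hbij
    (fun z : B => (z.1 : Quiver.Path a b).pathWeight w * z.2.pathWeight w)
    (fun p : A => (p : Quiver.Path a c).pathWeight w)
    (fun z => (weight_comp w z.1.val z.2).symm)).symm).trans
    (Fintype.sum_prod_type _)

open scoped Classical in
lemma aux_main [∀ a b : V, Fintype (Quiver.Path a b)] {R : Type*} [CommRing R]
    (hG : Quiver.IsAcyclic V) (w : ∀ {a b : V}, (a ⟶ b) → R) :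
    ∀ (n : ℕ) (π : Fin (n + 1) → V)
      (_ : ∀ i : Fin n, Nonempty (Quiver.Path (π i.castSucc) (π i.succ))),
    (∑ p : {p : Quiver.Path (π 0) (π (Fin.last n)) //
        ∀ i : Fin (n + 1), p.PassesThrough (π i)},
        (p : Quiver.Path (π 0) (π (Fin.last n))).pathWeight w)
      = ∏ i : Fin n, ∑ p : Quiver.Path (π i.castSucc) (π i.succ), p.pathWeight w := by
  intro n
  induction n with
  | zero =>
    intro π hπ
    have h0 : (Fin.last 0) = (0 : Fin 1) := rfl
    rw [h0]
    letI : Unique {p : Quiver.Path (π 0) (π 0) // ∀ i : Fin 1, p.PassesThrough (π i)} :=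
      { default := ⟨Quiver.Path.nil, by
          intro i
          have : i = 0 := Fin.fin_one_eq_zero i
          subst this
          exact start_mem_vertices _⟩
        uniq := fun p => Subtype.ext (hG _ p.val) }
    rw [Fintype.sum_unique, Fin.prod_univ_zero]
    rfl
  | succ n ih =>
    intro π hπ
    have key := suminsert (a := π 0) (b := π ((Fin.last n).castSucc))
      (c := π (Fin.last (n + 1))) hG w
      (fun x => ∃ i : Fin (n + 1), x = π i.castSucc)
      (fun x hx => by
        obtain ⟨i, rfl⟩ := hx
        exact nonempty_path_of_le π hπ (n - i.val) i.castSucc ((Fin.last n).castSucc)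
          (by simp only [Fin.coe_castSucc, Fin.val_last]; omega))
    have e1 : ∀ p : Quiver.Path (π 0) (π (Fin.last (n + 1))),
        (∀ i : Fin (n + 2), p.PassesThrough (π i)) ↔
        (p.PassesThrough (π ((Fin.last n).castSucc)) ∧
          ∀ x, (∃ i : Fin (n + 1), x = π i.castSucc) → p.PassesThrough x) := by
      intro p
      constructor
      · exact fun h => ⟨h _, fun x hx => by obtain ⟨i, rfl⟩ := hx; exact h i.castSucc⟩
      · rintro ⟨h1, h2⟩ i
        refine Fin.lastCases ?_ (fun j => h2 _ ⟨j, rfl⟩) i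
        exact end_mem_vertices p
    have lhs_eq := Fintype.sum_equiv (Equiv.subtypeEquivRight e1)
      (fun p : {p : Quiver.Path (π 0) (π (Fin.last (n + 1))) //
          ∀ i : Fin (n + 2), p.PassesThrough (π i)} =>
        (p : Quiver.Path (π 0) (π (Fin.last (n + 1)))).pathWeight w)
      (fun p => (p : Quiver.Path (π 0) (π (Fin.last (n + 1)))).pathWeight w)
      (fun _ => rfl)
    rw [lhs_eq, key, Fin.prod_univ_castSucc]
    simp only [Fin.succ_last]
    congr 1
    have ih' := ih (fun i : Fin (n + 1) => π i.castSucc)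
      (fun i => by have h := hπ i.castSucc; rwa [Fin.succ_castSucc] at h)
    simp only [Fin.castSucc_zero] at ih'
    simp only [Fin.succ_castSucc]
    rw [← ih']
    exact Fintype.sum_equiv (Equiv.subtypeEquivRight
      (fun q => ⟨fun h i => h _ ⟨i, rfl⟩, fun h x hx => by obtain ⟨i, rfl⟩ := hx; exact h i⟩))
      _ _ (fun _ => rfl)

end Aux

open scoped Classical in
/-- **Chain rule for pattern influence (algebraic form of Proposition 1).**
In an acyclic directed graph with finite path sets and edge weights in a commutative ring,
for any pattern `π = [π₀, …, πₙ]` (each adjacent pair joined by at least one path), the sum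
over all paths `p ∈ γ(π)` — the paths from `π₀` to `πₙ` passing through every `πᵢ` — of the
weight of `p` equals the product over `i = 1, …, n` of the total weights of the paths from
`πᵢ₋₁` to `πᵢ`. -/
theorem sum_weight_pattern_eq_prod {V : Type u} [Quiver.{v + 1} V]
    [∀ a b : V, Fintype (Quiver.Path a b)] {R : Type*} [CommRing R]
    (hG : Quiver.IsAcyclic V) (w : ∀ {a b : V}, (a ⟶ b) → R)
    {n : ℕ} (π : Fin (n + 1) → V)
    (hπ : ∀ i : Fin n, Nonempty (Quiver.Path (π i.castSucc) (π i.succ))) :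
    (∑ p : {p : Quiver.Path (π 0) (π (Fin.last n)) //
        ∀ i : Fin (n + 1), p.PassesThrough (π i)},
        (p : Quiver.Path (π 0) (π (Fin.last n))).pathWeight w)
      = ∏ i : Fin n, ∑ p : Quiver.Path (π i.castSucc) (π i.succ), p.pathWeight w := by
  exact aux_main hG (w := w) n π hπ
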